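/- Let G be a connected graph with chromatic number r ≥ 2, adjacency matrix A, degree diagonal matrix D, and Laplacian L = D − A. Then μ(D + (1/(r−1))A) ≤ (r−1)·μ(L), where μ denotes the largest eigenvalue. -/

import Mathlib

open Matrix SimpleGraph
open Pointwise

noncomputable def maxEigR {n : ℕ} (A : Matrix (Fin n) (Fin n) ℝ) : ℝ :=
  sSup (spectrum ℝ A)

lemma mem_le_maxEigR {n : ℕ} {M : Matrix (Fin n) (Fin n) ℝ} {x : ℝ}
    (hx : x ∈ spectrum ℝ M) : x ≤ maxEigR M :=
  le_csSup (Matrix.finite_real_spectrum (A := M)).bddAbove hx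

lemma isHermitian_of_isSymm {n : ℕ} {M : Matrix (Fin n) (Fin n) ℝ} (h : M.IsSymm) :
    M.IsHermitian := by
  rwa [Matrix.IsHermitian, conjTranspose_eq_transpose_of_trivial]

lemma rayleigh_le {n : ℕ} [Nonempty (Fin n)] {M : Matrix (Fin n) (Fin n) ℝ}
    (hM : M.IsHermitian) (y : Fin n → ℝ) :
    y ⬝ᵥ (M *ᵥ y) ≤ maxEigR M * (y ⬝ᵥ y) := by
  set μ := maxEigR M with hμ
  have halg : μ • (1 : Matrix (Fin n) (Fin n) ℝ) = algebraMap ℝ _ μ := by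
    rw [Algebra.algebraMap_eq_smul_one]
  have h1 : (μ • (1 : Matrix (Fin n) (Fin n) ℝ)).IsHermitian := by
    simp [Matrix.IsHermitian, conjTranspose_smul]
  have hN : (μ • (1 : Matrix (Fin n) (Fin n) ℝ) - M).IsHermitian := h1.sub hM
  have hPSD : (μ • (1 : Matrix (Fin n) (Fin n) ℝ) - M).PosSemidef := by
    refine hN.posSemidef_iff_eigenvalues_nonneg.mpr fun i => (?_ : (0:ℝ) ≤ _)
    have hmem : hN.eigenvalues i ∈ ({μ} : Set ℝ) - spectrum ℝ M := by
      rw [spectrum.singleton_sub_eq, ← halg]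
      exact hN.eigenvalues_mem_spectrum_real i
    obtain ⟨a, ha, b, hb, hab⟩ := Set.mem_sub.mp hmem
    rw [Set.mem_singleton_iff] at ha
    have hble := mem_le_maxEigR hb
    rw [← hab, ha]; linarith
  have h := hPSD.dotProduct_mulVec_nonneg y
  simp only [star_trivial, RCLike.re_to_real, sub_mulVec, smul_mulVec, one_mulVec,
    dotProduct_sub, dotProduct_smul, smul_eq_mul] at h
  linarith

lemma maxEigR_le {n : ℕ} [Nonempty (Fin n)] {M : Matrix (Fin n) (Fin n) ℝ}
    (hM : M.IsHermitian) {c : ℝ}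
    (h : ∀ x : Fin n → ℝ, x ⬝ᵥ (M *ᵥ x) ≤ c * (x ⬝ᵥ x)) : maxEigR M ≤ c := by
  rw [maxEigR, hM.spectrum_real_eq_range_eigenvalues]
  refine csSup_le (Set.range_nonempty _) ?_
  rintro _ ⟨i, rfl⟩
  have hv : M *ᵥ ⇑(hM.eigenvectorBasis i) = hM.eigenvalues i • ⇑(hM.eigenvectorBasis i) :=
    hM.mulVec_eigenvectorBasis i
  set v : Fin n → ℝ := ⇑(hM.eigenvectorBasis i) with hvdef
  have hnorm : v ⬝ᵥ v = 1 := by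
    have h1 : (inner ℝ (hM.eigenvectorBasis i) (hM.eigenvectorBasis i) : ℝ) = 1 := by
      rw [real_inner_self_eq_norm_sq, hM.eigenvectorBasis.orthonormal.1 i]; norm_num
    simp only [PiLp.inner_apply, RCLike.inner_apply, conj_trivial] at h1
    simpa [dotProduct, mul_comm] using h1
  have := h v
  rw [hv, dotProduct_smul, smul_eq_mul, hnorm, mul_one, mul_one] at this
  exact this

lemma maxEigR_lap_nonneg {n : ℕ} [Nonempty (Fin n)] (G : SimpleGraph (Fin n))
    [DecidableRel G.Adj] : 0 ≤ maxEigR (G.lapMatrix ℝ) := by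
  have hP := G.posSemidef_lapMatrix ℝ
  obtain ⟨i⟩ : Nonempty (Fin n) := inferInstance
  exact (hP.eigenvalues_nonneg i).trans
    (mem_le_maxEigR (hP.1.eigenvalues_mem_spectrum_real i))

lemma key_ineq {n r : ℕ} (G : SimpleGraph (Fin n)) [DecidableRel G.Adj] (hr : 2 ≤ r)
    (C : G.Coloring (Fin r)) {μ : ℝ}
    (hray : ∀ y : Fin n → ℝ, y ⬝ᵥ (G.lapMatrix ℝ *ᵥ y) ≤ μ * (y ⬝ᵥ y))
    (x : Fin n → ℝ) :
    x ⬝ᵥ ((G.degMatrix ℝ + ((r : ℝ) - 1)⁻¹ • G.adjMatrix ℝ) *ᵥ x) ≤ μ * (x ⬝ᵥ x) := by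
  classical
  set L := G.lapMatrix ℝ with hLdef
  let xs : Fin r → Fin n → ℝ := fun s v => if C v = s then x v else 0
  have hxs : ∀ s v, xs s v = if C v = s then x v else 0 := fun s v => rfl
  have hxsum : ∑ s, xs s = x := by
    funext v
    rw [Finset.sum_apply]
    simp only [hxs]
    simp
  have hsq : ∀ v, ∑ s, xs s v * xs s v = x v * x v := by
    intro v
    have h1 : ∀ s, xs s v * xs s v = if C v = s then x v * x v else 0 := by
      intro s; rw [hxs]; split_ifs <;> ring
    simp_rw [h1]
    simp
  -- linearity helpers
  have hmv : ∀ (M : Matrix (Fin n) (Fin n) ℝ) (f : Fin r → Fin n → ℝ),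
      M *ᵥ (∑ s, f s) = ∑ s, M *ᵥ f s := by
    intro M f
    exact map_sum M.mulVecLin f Finset.univ
  have hdl : ∀ (f : Fin r → Fin n → ℝ) (z : Fin n → ℝ),
      (∑ s, f s) ⬝ᵥ z = ∑ s, f s ⬝ᵥ z := by
    intro f z
    simp only [dotProduct, Finset.sum_apply, Finset.sum_mul]
    exact Finset.sum_comm
  have hdr : ∀ (y : Fin n → ℝ) (f : Fin r → Fin n → ℝ),
      y ⬝ᵥ (∑ s, f s) = ∑ s, y ⬝ᵥ f s := by
    intro y f
    simp only [dotProduct, Finset.sum_apply, Finset.mul_sum]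
    exact Finset.sum_comm
  have hb : ∀ (M : Matrix (Fin n) (Fin n) ℝ),
      x ⬝ᵥ (M *ᵥ x) = ∑ s, ∑ t, xs s ⬝ᵥ (M *ᵥ xs t) := by
    intro M
    conv_lhs => rw [← hxsum]
    rw [hmv, hdl]
    exact Finset.sum_congr rfl fun s _ => hdr _ _
  -- adjacency blocks vanish
  have hA0 : ∀ s, xs s ⬝ᵥ (G.adjMatrix ℝ *ᵥ xs s) = 0 := by
    intro s
    simp only [dotProduct, mulVec]
    refine Finset.sum_eq_zero fun v _ => ?_
    by_cases hv : C v = s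
    · refine mul_eq_zero_of_right _ (Finset.sum_eq_zero fun w _ => ?_)
      by_cases hw : C w = s
      · have hadj : ¬ G.Adj v w := fun h => C.valid h (hv.trans hw.symm)
        simp [hadj]
      · simp [hxs, hw]
    · simp [hxs, hv]
  -- degree part
  have hD : ∑ s, xs s ⬝ᵥ (G.degMatrix ℝ *ᵥ xs s) = x ⬝ᵥ (G.degMatrix ℝ *ᵥ x) := by
    have h1 : ∀ (y : Fin n → ℝ), y ⬝ᵥ (G.degMatrix ℝ *ᵥ y)
        = ∑ v, (G.degree v : ℝ) * (y v * y v) := by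
      intro y
      simp only [dotProduct, degMatrix_mulVec_apply]
      exact Finset.sum_congr rfl fun v _ => by ring
    simp_rw [h1]
    rw [Finset.sum_comm]
    refine Finset.sum_congr rfl fun v _ => ?_
    rw [← Finset.mul_sum, hsq v]
  have hLsplit : ∀ (y z : Fin n → ℝ), y ⬝ᵥ (L *ᵥ z)
      = y ⬝ᵥ (G.degMatrix ℝ *ᵥ z) - y ⬝ᵥ (G.adjMatrix ℝ *ᵥ z) := by
    intro y z
    rw [hLdef, lapMatrix, sub_mulVec, dotProduct_sub]
  have hS : ∑ s, xs s ⬝ᵥ (L *ᵥ xs s) = x ⬝ᵥ (G.degMatrix ℝ *ᵥ x) := by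
    simp_rw [hLsplit, hA0, sub_zero]
    exact hD
  -- the summed Rayleigh inequality
  have hmain : ∑ s, ∑ t, ((xs s - xs t) ⬝ᵥ (L *ᵥ (xs s - xs t)))
      ≤ μ * (∑ s, ∑ t, ((xs s - xs t) ⬝ᵥ (xs s - xs t))) := by
    rw [Finset.mul_sum]
    refine Finset.sum_le_sum fun s _ => ?_
    rw [Finset.mul_sum]
    exact Finset.sum_le_sum fun t _ => hray _
  -- expand LHS
  have hexpL : ∀ s t, (xs s - xs t) ⬝ᵥ (L *ᵥ (xs s - xs t))
      = xs s ⬝ᵥ (L *ᵥ xs s) + xs t ⬝ᵥ (L *ᵥ xs t)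
        - xs s ⬝ᵥ (L *ᵥ xs t) - xs t ⬝ᵥ (L *ᵥ xs s) := by
    intro s t
    rw [mulVec_sub, dotProduct_sub, sub_dotProduct, sub_dotProduct]
    ring
  have hcross : ∑ s, ∑ t, xs t ⬝ᵥ (L *ᵥ xs s) = x ⬝ᵥ (L *ᵥ x) := by
    rw [hb L]; exact Finset.sum_comm
  have hLHS : ∑ s, ∑ t, ((xs s - xs t) ⬝ᵥ (L *ᵥ (xs s - xs t)))
      = 2 * (r : ℝ) * (x ⬝ᵥ (G.degMatrix ℝ *ᵥ x)) - 2 * (x ⬝ᵥ (L *ᵥ x)) := by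
    simp_rw [hexpL]
    simp only [Finset.sum_sub_distrib, Finset.sum_add_distrib, Finset.sum_const,
      Finset.card_univ, Fintype.card_fin, nsmul_eq_mul]
    rw [← Finset.mul_sum, hS, ← hb L, hcross]
    ring
  -- expand RHS
  have hexpR : ∀ s t : Fin r, (xs s - xs t) ⬝ᵥ (xs s - xs t)
      = xs s ⬝ᵥ xs s + xs t ⬝ᵥ xs t - xs s ⬝ᵥ xs t - xs t ⬝ᵥ xs s := by
    intro s t
    rw [dotProduct_sub, sub_dotProduct, sub_dotProduct]
    ring
  have hb1 : x ⬝ᵥ x = ∑ s, ∑ t, xs s ⬝ᵥ xs t := by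
    have := hb 1
    simpa [one_mulVec] using this
  have hcross1 : ∑ s, ∑ t, xs t ⬝ᵥ xs s = x ⬝ᵥ x := by
    rw [hb1]; exact Finset.sum_comm
  have hNS : ∑ s, xs s ⬝ᵥ xs s = x ⬝ᵥ x := by
    simp only [dotProduct]
    rw [Finset.sum_comm]
    exact Finset.sum_congr rfl fun v _ => hsq v
  have hRHS : ∑ s, ∑ t, ((xs s - xs t) ⬝ᵥ (xs s - xs t))
      = 2 * (r : ℝ) * (x ⬝ᵥ x) - 2 * (x ⬝ᵥ x) := by
    simp_rw [hexpR]
    simp only [Finset.sum_sub_distrib, Finset.sum_add_distrib, Finset.sum_const,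
      Finset.card_univ, Fintype.card_fin, nsmul_eq_mul]
    rw [← Finset.mul_sum, hNS, ← hb1, hcross1]
    ring
  rw [hLHS, hRHS] at hmain
  have hQL : x ⬝ᵥ (L *ᵥ x) = x ⬝ᵥ (G.degMatrix ℝ *ᵥ x) - x ⬝ᵥ (G.adjMatrix ℝ *ᵥ x) :=
    hLsplit x x
  rw [hQL] at hmain
  -- now pure arithmetic
  have hgoal : x ⬝ᵥ ((G.degMatrix ℝ + ((r : ℝ) - 1)⁻¹ • G.adjMatrix ℝ) *ᵥ x)
      = x ⬝ᵥ (G.degMatrix ℝ *ᵥ x) + ((r : ℝ) - 1)⁻¹ * (x ⬝ᵥ (G.adjMatrix ℝ *ᵥ x)) := by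
    rw [add_mulVec, dotProduct_add, smul_mulVec, dotProduct_smul, smul_eq_mul]
  rw [hgoal]
  have ha : (0 : ℝ) < (r : ℝ) - 1 := by
    have : (2 : ℝ) ≤ (r : ℝ) := by exact_mod_cast hr
    linarith
  set QD := x ⬝ᵥ (G.degMatrix ℝ *ᵥ x)
  set QA := x ⬝ᵥ (G.adjMatrix ℝ *ᵥ x)
  set NX := x ⬝ᵥ x
  -- hmain : 2r QD - 2(QD - QA) ≤ μ (2r NX - 2 NX)
  have h2 : ((r : ℝ) - 1) * QD + QA ≤ ((r : ℝ) - 1) * (μ * NX) := by nlinarith [hmain]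
  have h3 := mul_le_mul_of_nonneg_left h2 (le_of_lt (inv_pos.mpr ha))
  calc QD + ((r : ℝ) - 1)⁻¹ * QA
      = ((r : ℝ) - 1)⁻¹ * (((r : ℝ) - 1) * QD + QA) := by
        rw [mul_add, inv_mul_cancel_left₀ ha.ne']
    _ ≤ ((r : ℝ) - 1)⁻¹ * (((r : ℝ) - 1) * (μ * NX)) := h3
    _ = μ * NX := inv_mul_cancel_left₀ ha.ne' _

/-- For a connected graph with chromatic number `r ≥ 2`,
`μ(D + (1/(r−1))·A) ≤ (r−1)·μ(L)`. -/
theorem stmt9 {n r : ℕ} (G : SimpleGraph (Fin n)) [DecidableRel G.Adj]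
    (hconn : G.Connected) (hr : 2 ≤ r) (hχ : G.chromaticNumber = (r : ℕ∞)) :
    maxEigR (G.degMatrix ℝ + ((r : ℝ) - 1)⁻¹ • G.adjMatrix ℝ) ≤
      ((r : ℝ) - 1) * maxEigR (G.lapMatrix ℝ) := by
  have hne : Nonempty (Fin n) := hconn.nonempty
  have hcol : G.Colorable r := chromaticNumber_le_iff_colorable.mp (le_of_eq hχ)
  obtain ⟨C⟩ := hcol
  have hL : (G.lapMatrix ℝ).IsHermitian := (G.posSemidef_lapMatrix ℝ).1
  have hray : ∀ y : Fin n → ℝ,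
      y ⬝ᵥ (G.lapMatrix ℝ *ᵥ y) ≤ maxEigR (G.lapMatrix ℝ) * (y ⬝ᵥ y) :=
    fun y => rayleigh_le hL y
  have hM : (G.degMatrix ℝ + ((r : ℝ) - 1)⁻¹ • G.adjMatrix ℝ).IsHermitian :=
    isHermitian_of_isSymm ((G.isSymm_degMatrix (R := ℝ)).add ((G.isSymm_adjMatrix (α := ℝ)).smul _))
  have h1 : maxEigR (G.degMatrix ℝ + ((r : ℝ) - 1)⁻¹ • G.adjMatrix ℝ)
      ≤ maxEigR (G.lapMatrix ℝ) :=
    maxEigR_le hM fun x => key_ineq G hr C hray x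
  have h0 : 0 ≤ maxEigR (G.lapMatrix ℝ) := maxEigR_lap_nonneg G
  have hr1 : (1 : ℝ) ≤ (r : ℝ) - 1 := by
    have : (2 : ℝ) ≤ (r : ℝ) := by exact_mod_cast hr
    linarith
  calc maxEigR (G.degMatrix ℝ + ((r : ℝ) - 1)⁻¹ • G.adjMatrix ℝ)
      ≤ maxEigR (G.lapMatrix ℝ) := h1
    _ = 1 * maxEigR (G.lapMatrix ℝ) := (one_mul _).symm
    _ ≤ ((r : ℝ) - 1) * maxEigR (G.lapMatrix ℝ) := mul_le_mul_of_nonneg_right hr1 h0
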